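/- For every real number b > -1, every a ∈ [0,1), every natural number m ≥ 1 and every t₀ > 0, the iterated integral ∫₀^{t₀} dt₁ ∫₀^{t₁} dt₂ ⋯ ∫₀^{t_{m-1}} dt_m · t_m^b · ∏_{j=0}^{m-1} (t_j − t_{j+1})^{−a} equals t₀^{b + m(1−a)} · Γ(1−a)^m · Γ(1+b) / Γ(1 + b + m(1−a)). -/

import Mathlib

open MeasureTheory Real


lemma key_beta (a c t : ℝ) (hc : -1 < c) (ha1 : a < 1) (ht : 0 < t) :
    ∫ s in (0:ℝ)..t, (t - s) ^ (-a) * s ^ c =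
      t ^ (c + 1 - a) * (Real.Gamma (1 - a) * Real.Gamma (1 + c) / Real.Gamma (c + 2 - a)) := by
  have hu : (0:ℝ) < 1 + c := by linarith
  have hv : (0:ℝ) < 1 - a := by linarith
  set u : ℂ := ((1 + c : ℝ) : ℂ)
  set v : ℂ := ((1 - a : ℝ) : ℂ)
  have hure : 0 < u.re := by simpa [u] using hu
  have hvre : 0 < v.re := by simpa [v] using hv
  have hscaled := Complex.betaIntegral_scaled u v ht
  have hbeta := Complex.Gamma_mul_Gamma_eq_betaIntegral hure hvre
  have hGuv : Complex.Gamma (u + v) ≠ 0 := by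
    apply Complex.Gamma_ne_zero
    intro m
    intro h
    have : (u + v).re = (c + 2 - a : ℝ) := by simp [u, v]; ring
    rw [h] at this
    simp at this
    linarith [this, (by positivity : (0:ℝ) ≤ (m:ℝ))]
  have hB : Complex.betaIntegral u v = Complex.Gamma u * Complex.Gamma v / Complex.Gamma (u + v) := by
    field_simp [hbeta]
    rw [hbeta]; ring
  -- identify LHS complex integral with ofReal of real integral
  have hcongr : (∫ x in (0:ℝ)..t, (x:ℂ) ^ (u - 1) * ((t:ℂ) - x) ^ (v - 1)) =
      ((∫ s in (0:ℝ)..t, (t - s) ^ (-a) * s ^ c : ℝ) : ℂ) := by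
    rw [← intervalIntegral.integral_ofReal]
    apply intervalIntegral.integral_congr_ae
    have hne : ∀ᵐ x : ℝ, x ≠ t := by
      rw [MeasureTheory.ae_iff]
      simp [Set.setOf_eq_eq_singleton]
    filter_upwards [hne] with x hx hmem
    rw [Set.uIoc_of_le ht.le] at hmem
    have hx0 : 0 < x := hmem.1
    have hxt : x < t := lt_of_le_of_ne hmem.2 hx
    have h1 : (x:ℂ) ^ (u - 1) = ((x ^ c : ℝ) : ℂ) := by
      rw [Complex.ofReal_cpow hx0.le]
      congr 1
      simp [u]
    have h2 : ((t:ℂ) - x) ^ (v - 1) = (((t - x) ^ (-a) : ℝ) : ℂ) := by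
      rw [Complex.ofReal_cpow (by linarith)]
      push_cast
      congr 1
      simp [v]
    rw [h1, h2]
    push_cast
    ring
  rw [hcongr, hB] at hscaled
  have hrhs : ((t:ℂ)) ^ (u + v - 1) = ((t ^ (c + 1 - a) : ℝ) : ℂ) := by
    rw [Complex.ofReal_cpow ht.le]
    congr 1
    simp [u, v]
    ring
  rw [hrhs] at hscaled
  have : ((∫ s in (0:ℝ)..t, (t - s) ^ (-a) * s ^ c : ℝ) : ℂ) =
      ((t ^ (c + 1 - a) * (Real.Gamma (1 - a) * Real.Gamma (1 + c) / Real.Gamma (c + 2 - a)) : ℝ) : ℂ) := by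
    rw [hscaled]
    have e1 : Complex.Gamma u = ((Real.Gamma (1 + c) : ℝ) : ℂ) := Complex.Gamma_ofReal _
    have e2 : Complex.Gamma v = ((Real.Gamma (1 - a) : ℝ) : ℂ) := Complex.Gamma_ofReal _
    have e3 : Complex.Gamma (u + v) = ((Real.Gamma (c + 2 - a) : ℝ) : ℂ) := by
      have : u + v = ((c + 2 - a : ℝ) : ℂ) := by simp [u, v]; push_cast; ring
      rw [this]; exact Complex.Gamma_ofReal _
    rw [e1, e2, e3]
    push_cast
    ring
  exact_mod_cast this

lemma aux_div (A G T B D : ℝ) (hG : G ≠ 0) :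
    A / G * (T * (B * G / D)) = T * (B * A) / D := by
  have h : A / G * (T * (B * G / D)) = T * (B * A) * (G / G) / D := by ring
  rw [h, div_self hG, mul_one]


/-- Iterated convolution-type integral: `iterInt a b 0 t = t ^ b` and
`iterInt a b (n+1) t = ∫₀ᵗ (t - s)^(-a) * iterInt a b n s ds`. -/
noncomputable def iterInt (a b : ℝ) : ℕ → ℝ → ℝ
  | 0, t => t ^ b
  | (n + 1), t => ∫ s in (0:ℝ)..t, (t - s) ^ (-a) * iterInt a b n s

lemma iterInt_eq (a b : ℝ) (hb : -1 < b) (ha0 : 0 ≤ a) (ha1 : a < 1) :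
    ∀ (n : ℕ) (t : ℝ), 0 < t → iterInt a b n t =
      t ^ (b + (n : ℝ) * (1 - a)) * (Real.Gamma (1 - a)) ^ n * Real.Gamma (1 + b) /
        Real.Gamma (1 + b + (n : ℝ) * (1 - a)) := by
  intro n
  induction n with
  | zero =>
    intro t ht
    have : Real.Gamma (1 + b) ≠ 0 := (Real.Gamma_pos_of_pos (by linarith)).ne'
    simp [iterInt]
    field_simp
  | succ n ih =>
    intro t ht
    set β : ℝ := b + (n : ℝ) * (1 - a) with hβ
    have hna : 0 ≤ (n : ℝ) * (1 - a) := mul_nonneg (Nat.cast_nonneg n) (by linarith)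
    have hβ1 : -1 < β := by simp only [hβ]; linarith
    have hG : 0 < Real.Gamma (1 + b + (n : ℝ) * (1 - a)) :=
      Real.Gamma_pos_of_pos (by linarith)
    set C : ℝ := (Real.Gamma (1 - a)) ^ n * Real.Gamma (1 + b) /
        Real.Gamma (1 + b + (n : ℝ) * (1 - a)) with hC
    have hstep : iterInt a b (n + 1) t = ∫ s in (0:ℝ)..t, (t - s) ^ (-a) * iterInt a b n s := rfl
    have hcongr : (∫ s in (0:ℝ)..t, (t - s) ^ (-a) * iterInt a b n s)
        = ∫ s in (0:ℝ)..t, C * ((t - s) ^ (-a) * s ^ β) := by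
      apply intervalIntegral.integral_congr_ae
      have hne : ∀ᵐ x : ℝ, x ≠ t := by
        rw [MeasureTheory.ae_iff]
        simp [Set.setOf_eq_eq_singleton]
      filter_upwards [hne] with x hx hmem
      rw [Set.uIoc_of_le ht.le] at hmem
      have hx0 : 0 < x := hmem.1
      rw [ih x hx0]
      simp only [hC, hβ]
      ring
    rw [hstep, hcongr, intervalIntegral.integral_const_mul,
      key_beta a β t hβ1 ha1 ht]
    have hGβ : 0 < Real.Gamma (1 + β) := Real.Gamma_pos_of_pos (by linarith)
    have e1 : (1 + b + (n:ℝ) * (1 - a)) = 1 + β := by simp only [hβ]; ring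
    have e2 : β + 2 - a = 1 + b + ((n:ℝ) + 1) * (1 - a) := by simp only [hβ]; ring
    have e3 : β + 1 - a = b + ((n:ℝ) + 1) * (1 - a) := by simp only [hβ]; ring
    have hne1 : Real.Gamma (1 + β) ≠ 0 := hGβ.ne'
    rw [hC, e1, e2, e3]
    push_cast
    rw [aux_div _ _ _ _ _ hne1, pow_succ]
    ring

theorem stmt0 (a b : ℝ) (hb : -1 < b) (ha0 : 0 ≤ a) (ha1 : a < 1)
    (m : ℕ) (hm : 1 ≤ m) (t₀ : ℝ) (ht₀ : 0 < t₀) :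
    iterInt a b m t₀ =
      t₀ ^ (b + (m : ℝ) * (1 - a)) * (Real.Gamma (1 - a)) ^ m * Real.Gamma (1 + b) /
        Real.Gamma (1 + b + (m : ℝ) * (1 - a)) :=
  iterInt_eq a b hb ha0 ha1 m t₀ ht₀
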